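/- Define f : ℕ → ℝ by the recurrence: for each i with 0 ≤ i < n, M_{i+1} ≤ M_i + N_i/(n - i) and N_{i+1} ≤ (1 + 1/(n-i))·N_i, with M_0 = 0 and N_0 = C for some C ≥ 0 (all quantities nonnegative). Then for all 0 ≤ i ≤ n, N_i ≤ (n+1)/(n+1-i) · C and M_i ≤ i/(n+1-i) · C. -/
import Mathlib


/-- The inductive bookkeeping of the TruncatedRSD analysis. -/
theorem stmt8 (n : ℕ) (C : ℝ) (hC : 0 ≤ C) (M N : ℕ → ℝ)
    (hM0 : M 0 = 0) (hN0 : N 0 = C)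
    (hMnn : ∀ i, 0 ≤ M i) (hNnn : ∀ i, 0 ≤ N i)
    (hMrec : ∀ i < n, M (i + 1) ≤ M i + N i / ((n : ℝ) - i))
    (hNrec : ∀ i < n, N (i + 1) ≤ (1 + 1 / ((n : ℝ) - i)) * N i) :
    ∀ i ≤ n, N i ≤ ((n : ℝ) + 1) / ((n : ℝ) + 1 - i) * C ∧
      M i ≤ (i : ℝ) / ((n : ℝ) + 1 - i) * C := by
  intro i
  induction i with
  | zero =>
    intro _
    simp only [hM0, hN0, Nat.cast_zero, sub_zero, Nat.cast_ofNat, zero_div, zero_mul, le_refl,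
      and_true]
    rw [div_self (by positivity : ((n : ℝ) + 1) ≠ 0), one_mul]
  | succ i ih =>
    intro hi1
    have hin : i < n := hi1
    have hile : i ≤ n := hin.le
    obtain ⟨hN, hM⟩ := ih hile
    have hni : (0 : ℝ) < (n : ℝ) - i := by
      have : (i : ℝ) < n := by exact_mod_cast hin
      linarith
    have hn1i : (0 : ℝ) < (n : ℝ) + 1 - i := by linarith
    have key : ((n : ℝ) + 1 - (i + 1)) = (n : ℝ) - i := by push_cast; ring
    push_cast
    constructor
    · have h1 := hNrec i hin
      calc N (i + 1) ≤ (1 + 1 / ((n : ℝ) - i)) * N i := h1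
        _ ≤ (1 + 1 / ((n : ℝ) - i)) * (((n : ℝ) + 1) / ((n : ℝ) + 1 - i) * C) := by
            apply mul_le_mul_of_nonneg_left hN
            positivity
        _ = ((n : ℝ) + 1) / ((n : ℝ) + 1 - ((i : ℝ) + 1)) * C := by
            rw [key]
            field_simp
            ring
    · have h1 := hMrec i hin
      calc M (i + 1) ≤ M i + N i / ((n : ℝ) - i) := h1
        _ ≤ (i : ℝ) / ((n : ℝ) + 1 - i) * C
            + ((n : ℝ) + 1) / ((n : ℝ) + 1 - i) * C / ((n : ℝ) - i) := by
            apply add_le_add hM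
            exact div_le_div_of_nonneg_right hN hni.le
        _ = ((i : ℝ) + 1) / ((n : ℝ) + 1 - ((i : ℝ) + 1)) * C := by
            rw [key]
            field_simp
            ring
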